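/- Under the fulcrum hypotheses, the k-linear map T(V) ⊗_k H → T(V)#_M H sending a ⊗ h to π(T(s)(a)) · π(ι(f(h))) is bijective, where T(s) : T(V) → T(M) is the algebra homomorphism induced by the linear map s. In particular, T(V)#_M H is isomorphic to T(V) ⊗_k H as a k-vector space. -/

import Mathlib

open TensorProduct

/-- For a left module `M` over a `k`-algebra `H`, the `k`-linear map `h ↦ h • x`. -/
noncomputable def actL (k : Type*) {H M : Type*} [CommSemiring k] [Semiring H] [Algebra k H]
    [AddCommMonoid M] [Module k M] [Module H M] [IsScalarTower k H M] (x : M) :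
    H →ₗ[k] M where
  toFun h := h • x
  map_add' a b := add_smul a b x
  map_smul' c a := smul_assoc c a x

/-- The adjoint action `h ↦ Σ h₁ a S(h₂)` of a Hopf algebra on itself,
as a `k`-linear map in `h`. -/
noncomputable def adjL (k : Type*) {H : Type*} [CommSemiring k] [Semiring H] [HopfAlgebra k H]
    (a : H) : H →ₗ[k] H :=
  LinearMap.mul' k H ∘ₗ TensorProduct.map (LinearMap.mulRight k a)
    (HopfAlgebra.antipode (R := k)) ∘ₗ Coalgebra.comul

/-- `Σ ι(h₁ • x) · ι(f h₂)`, as a `k`-linear map in `h`, inside the tensor algebra `T(M)`. -/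
noncomputable def commRHS (k : Type*) {H M : Type*} [CommSemiring k] [Semiring H]
    [HopfAlgebra k H] [AddCommMonoid M] [Module k M] [Module H M] [IsScalarTower k H M]
    (f : H →ₗ[k] M) (x : M) : H →ₗ[k] TensorAlgebra k M :=
  LinearMap.mul' k (TensorAlgebra k M) ∘ₗ
    TensorProduct.map ((TensorAlgebra.ι k (M := M)) ∘ₗ actL k x)
      ((TensorAlgebra.ι k (M := M)) ∘ₗ f) ∘ₗ
    Coalgebra.comul

/-- The defining relations of the fulcrum `T(V)#_M H`:
`ι(f h)ι(f h') = ι(f (h h'))`, `ι(f 1) = 1`, and `ι(f h)ι(x) = Σ ι(h₁ • x)ι(f h₂)`. -/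
def fulcrumRel (k : Type*) {H M : Type*} [CommSemiring k] [Semiring H] [HopfAlgebra k H]
    [AddCommMonoid M] [Module k M] [Module H M] [IsScalarTower k H M] (f : H →ₗ[k] M)
    (u v : TensorAlgebra k M) : Prop :=
  (∃ h h' : H, u = TensorAlgebra.ι k (f h) * TensorAlgebra.ι k (f h') ∧
      v = TensorAlgebra.ι k (f (h * h'))) ∨
  (u = TensorAlgebra.ι k (f 1) ∧ v = 1) ∨
  (∃ (h : H) (x : M), u = TensorAlgebra.ι k (f h) * TensorAlgebra.ι k x ∧
      v = commRHS k f x h)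

section FulcrumSurj

variable {k H M V : Type*} [Field k] [Ring H] [HopfAlgebra k H]
    [AddCommGroup M] [Module k M] [Module H M] [IsScalarTower k H M]
    [AddCommGroup V] [Module k V]

theorem fulcrum_surj (f : H →ₗ[k] M) (s : V →ₗ[k] M) (P : M →ₗ[k] H) (Q : M →ₗ[k] V)
    (hPQ : ∀ x, f (P x) + s (Q x) = x) :
    Function.Surjective (LinearMap.mul' k (RingQuot (fulcrumRel k f)) ∘ₗ
      TensorProduct.map
        ((RingQuot.mkAlgHom k (fulcrumRel k f)).toLinearMap ∘ₗ
          (TensorAlgebra.lift k ((TensorAlgebra.ι k (M := M)) ∘ₗ s)).toLinearMap)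
        ((RingQuot.mkAlgHom k (fulcrumRel k f)).toLinearMap ∘ₗ
          (TensorAlgebra.ι k (M := M)) ∘ₗ f)) := by
  set π := RingQuot.mkAlgHom k (fulcrumRel k f) with hπ
  set Ts := TensorAlgebra.lift k ((TensorAlgebra.ι k (M := M)) ∘ₗ s) with hTs
  set Φ := (LinearMap.mul' k (RingQuot (fulcrumRel k f)) ∘ₗ
      TensorProduct.map (π.toLinearMap ∘ₗ Ts.toLinearMap)
        (π.toLinearMap ∘ₗ (TensorAlgebra.ι k (M := M)) ∘ₗ f)) with hΦdef
  have hΦ : ∀ (t : TensorAlgebra k V) (h : H),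
      Φ (t ⊗ₜ[k] h) = π (Ts t) * π (TensorAlgebra.ι k (f h)) := by
    intro t h
    simp [hΦdef, LinearMap.mul'_apply]
  set R := LinearMap.range Φ with hR
  have h2 : π (TensorAlgebra.ι k (f 1)) = 1 := by
    have := RingQuot.mkAlgHom_rel k
      (show fulcrumRel k f (TensorAlgebra.ι k (f 1)) 1 from Or.inr (Or.inl ⟨rfl, rfl⟩))
    rw [hπ, this, map_one]
  have h1 : ∀ h h' : H, π (TensorAlgebra.ι k (f h)) * π (TensorAlgebra.ι k (f h'))
      = π (TensorAlgebra.ι k (f (h * h'))) := by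
    intro h h'
    rw [← map_mul]
    exact RingQuot.mkAlgHom_rel k (show fulcrumRel k f _ _ from Or.inl ⟨h, h', rfl, rfl⟩)
  have h3 : ∀ (h : H) (x : M), π (TensorAlgebra.ι k (f h)) * π (TensorAlgebra.ι k x)
      = π (commRHS k f x h) := by
    intro h x
    rw [← map_mul]
    exact RingQuot.mkAlgHom_rel k (show fulcrumRel k f _ _ from Or.inr (Or.inr ⟨h, x, rfl, rfl⟩))
  have hBase : ∀ g : H, π (TensorAlgebra.ι k (f g)) ∈ R := by
    intro g
    refine ⟨(1 : TensorAlgebra k V) ⊗ₜ[k] g, ?_⟩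
    rw [hΦ, map_one, map_one, one_mul]
  have hSide : ∀ (t : TensorAlgebra k V) (g : H), π (Ts t) * π (TensorAlgebra.ι k (f g)) ∈ R :=
    fun t g => ⟨t ⊗ₜ[k] g, hΦ t g⟩
  have hC1 : ∀ (t : TensorAlgebra k V) (r : RingQuot (fulcrumRel k f)),
      r ∈ R → π (Ts t) * r ∈ R := by
    intro t r hr
    obtain ⟨z, rfl⟩ := hr
    induction z using TensorProduct.induction_on with
    | zero => simpa using zero_mem R
    | tmul u g =>
        refine ⟨(t * u) ⊗ₜ[k] g, ?_⟩
        rw [hΦ, hΦ, map_mul, map_mul, mul_assoc]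
    | add z1 z2 ih1 ih2 => rw [map_add, mul_add]; exact add_mem ih1 ih2
  have hC2 : ∀ (g : H) (r : RingQuot (fulcrumRel k f)),
      r ∈ R → r * π (TensorAlgebra.ι k (f g)) ∈ R := by
    intro g r hr
    obtain ⟨z, rfl⟩ := hr
    induction z using TensorProduct.induction_on with
    | zero => simpa using zero_mem R
    | tmul u g' => rw [hΦ, mul_assoc, h1]; exact hSide _ _
    | add z1 z2 ih1 ih2 => rw [map_add, add_mul]; exact add_mem ih1 ih2
  have hLcomm : ∀ (x : M) (h : H), π (commRHS k f x h) ∈ R := by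
    intro x h
    show π ((LinearMap.mul' k (TensorAlgebra k M) ∘ₗ
      TensorProduct.map ((TensorAlgebra.ι k (M := M)) ∘ₗ actL k x)
        ((TensorAlgebra.ι k (M := M)) ∘ₗ f)) (Coalgebra.comul h)) ∈ R
    induction (Coalgebra.comul (R := k) h : H ⊗[k] H) using TensorProduct.induction_on with
    | zero => simpa using zero_mem R
    | tmul a a' =>
        simp only [LinearMap.comp_apply, TensorProduct.map_tmul, LinearMap.mul'_apply,
          map_mul]
        set y := (actL k x) a with hy
        rw [show TensorAlgebra.ι k y = TensorAlgebra.ι k (f (P y)) + TensorAlgebra.ι k (s (Q y))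
          from by rw [← map_add, hPQ], map_add, add_mul]
        refine add_mem ?_ ?_
        · rw [h1]
          exact hBase _
        · refine ⟨(TensorAlgebra.ι k (Q y)) ⊗ₜ[k] a', ?_⟩
          rw [hΦ]
          congr 1
          rw [hTs]
          simp
    | add z1 z2 ih1 ih2 => rw [map_add, map_add]; exact add_mem ih1 ih2
  have hK : ∀ (t : TensorAlgebra k V) (h : H),
      π (TensorAlgebra.ι k (f h)) * π (Ts t) ∈ R := by
    intro t
    induction t using TensorAlgebra.induction with
    | algebraMap r =>
        intro h
        rw [AlgHom.commutes, AlgHom.commutes, ← Algebra.commutes]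
        refine ⟨(algebraMap k (TensorAlgebra k V) r) ⊗ₜ[k] h, ?_⟩
        rw [hΦ, AlgHom.commutes, AlgHom.commutes]
    | ι v =>
        intro h
        rw [show Ts (TensorAlgebra.ι k v) = TensorAlgebra.ι k (s v) by rw [hTs]; simp, h3]
        exact hLcomm _ _
    | mul t1 t2 ih1 ih2 =>
        intro h
        have ht2R : ∀ r ∈ R, r * π (Ts t2) ∈ R := by
          intro r hr
          obtain ⟨z, rfl⟩ := hr
          induction z using TensorProduct.induction_on with
          | zero => simpa using zero_mem R
          | tmul u g => rw [hΦ, mul_assoc]; exact hC1 u _ (ih2 g)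
          | add z1 z2 ihz1 ihz2 => rw [map_add, add_mul]; exact add_mem ihz1 ihz2
        rw [map_mul, map_mul, ← mul_assoc]
        exact ht2R _ (ih1 h)
    | add t1 t2 ih1 ih2 =>
        intro h
        rw [map_add, map_add, mul_add]
        exact add_mem (ih1 h) (ih2 h)
  have hC3 : ∀ (t : TensorAlgebra k V) (r : RingQuot (fulcrumRel k f)),
      r ∈ R → r * π (Ts t) ∈ R := by
    intro t r hr
    obtain ⟨z, rfl⟩ := hr
    induction z using TensorProduct.induction_on with
    | zero => simpa using zero_mem R
    | tmul u g => rw [hΦ, mul_assoc]; exact hC1 u _ (hK t g)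
    | add z1 z2 ih1 ih2 => rw [map_add, add_mul]; exact add_mem ih1 ih2
  have hone : (1 : RingQuot (fulcrumRel k f)) ∈ R := by
    refine ⟨(1 : TensorAlgebra k V) ⊗ₜ[k] 1, ?_⟩
    rw [hΦ, map_one, map_one, one_mul, h2]
  have hmulR : ∀ r r' : RingQuot (fulcrumRel k f), r ∈ R → r' ∈ R → r * r' ∈ R := by
    intro r r' hr hr'
    obtain ⟨z, rfl⟩ := hr'
    induction z using TensorProduct.induction_on with
    | zero => simpa using zero_mem R
    | tmul u g => rw [hΦ, ← mul_assoc]; exact hC2 g _ (hC3 u r hr)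
    | add z1 z2 ih1 ih2 => rw [map_add, mul_add]; exact add_mem ih1 ih2
  -- main surjectivity
  intro a
  obtain ⟨u, rfl⟩ := RingQuot.mkAlgHom_surjective k (fulcrumRel k f) a
  suffices h : π u ∈ R by exact h
  induction u using TensorAlgebra.induction with
  | algebraMap r =>
      rw [AlgHom.commutes, Algebra.algebraMap_eq_smul_one]
      exact Submodule.smul_mem R r hone
  | ι x =>
      have : TensorAlgebra.ι k x = TensorAlgebra.ι k (f (P x)) + TensorAlgebra.ι k (s (Q x)) := by
        rw [← map_add, hPQ]
      rw [this, map_add]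
      refine add_mem (hBase _) ?_
      refine ⟨(TensorAlgebra.ι k (Q x)) ⊗ₜ[k] 1, ?_⟩
      rw [hΦ, h2, mul_one, hTs]
      simp
  | mul u1 u2 ih1 ih2 => rw [map_mul]; exact hmulR _ _ ih1 ih2
  | add u1 u2 ih1 ih2 => rw [map_add]; exact add_mem ih1 ih2

end FulcrumSurj
namespace Fulcrum

variable {k H M V : Type*} [Field k] [Ring H] [HopfAlgebra k H]
    [AddCommGroup M] [Module k M] [Module H M] [IsScalarTower k H M]
    [AddCommGroup V] [Module k V] {ιB : Type*}

theorem actL_apply (x : M) (h : H) : actL k x h = h • x := rfl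

/-- The embedding of `V` into the monoid algebra as degree-one elements. -/
noncomputable def emb (B : Module.Basis ιB k V) : V →ₗ[k] MonoidAlgebra H (FreeMonoid ιB) :=
  (Finsupp.lsum k fun b =>
      (MonoidAlgebra.lsingle (FreeMonoid.of b) :
        H →ₗ[k] MonoidAlgebra H (FreeMonoid ιB)) ∘ₗ (Algebra.linearMap k H)) ∘ₗ
    (B.repr : V ≃ₗ[k] (ιB →₀ k)).toLinearMap

theorem emb_apply (B : Module.Basis ιB k V) (v : V) :
    emb (H := H) B v = (B.repr v).sum
      (fun b c => MonoidAlgebra.single (FreeMonoid.of b) (algebraMap k H c)) := by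
  simp [emb, Finsupp.lsum_apply, Finsupp.sum]

theorem emb_basis (B : Module.Basis ιB k V) (b : ιB) :
    emb (H := H) B (B b) = MonoidAlgebra.single (FreeMonoid.of b) 1 := by
  rw [emb_apply, B.repr_self, Finsupp.sum_single_index] <;> simp

variable (P : M →ₗ[k] H) (Q : M →ₗ[k] V) (B : Module.Basis ιB k V)

/-- candidate action of `x : M`, given a candidate action `K` of `H`. -/
noncomputable def rho (K : H →ₗ[k] Module.End k (MonoidAlgebra H (FreeMonoid ιB))) :
    M →ₗ[k] Module.End k (MonoidAlgebra H (FreeMonoid ιB)) :=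
  K ∘ₗ P + (LinearMap.mul k (MonoidAlgebra H (FreeMonoid ιB))) ∘ₗ (emb B) ∘ₗ Q

theorem rho_apply (K : H →ₗ[k] Module.End k (MonoidAlgebra H (FreeMonoid ιB))) (x : M)
    (e : MonoidAlgebra H (FreeMonoid ιB)) :
    rho P Q B K x e = K (P x) e + emb B (Q x) * e := rfl

/-- `h ↦ Σ ρ(h₁ • x) ∘ K(h₂)`. -/
noncomputable def bgen (K : H →ₗ[k] Module.End k (MonoidAlgebra H (FreeMonoid ιB))) (x : M) :
    H →ₗ[k] Module.End k (MonoidAlgebra H (FreeMonoid ιB)) :=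
  (LinearMap.mul' k (Module.End k (MonoidAlgebra H (FreeMonoid ιB)))) ∘ₗ
    (TensorProduct.map ((rho P Q B K) ∘ₗ actL k x) K) ∘ₗ (Coalgebra.comul (R := k))

variable (s : V →ₗ[k] M)

/-- The per-word component of the recursive definition. -/
noncomputable def wordMapL (K : H →ₗ[k] Module.End k (MonoidAlgebra H (FreeMonoid ιB))) :
    FreeMonoid ιB → (H →ₗ[k] H →ₗ[k] MonoidAlgebra H (FreeMonoid ιB)) := fun w =>
  match FreeMonoid.toList w with
  | [] => (LinearMap.mul k H).compr₂
      (MonoidAlgebra.lsingle (1 : FreeMonoid ιB) : H →ₗ[k] MonoidAlgebra H (FreeMonoid ιB))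
  | b :: w' => (LinearMap.lcomp k (MonoidAlgebra H (FreeMonoid ιB))
      (MonoidAlgebra.lsingle (FreeMonoid.ofList w') : H →ₗ[k] MonoidAlgebra H (FreeMonoid ιB))) ∘ₗ
      (bgen P Q B K (s (B b)))

noncomputable def extend (K : H →ₗ[k] Module.End k (MonoidAlgebra H (FreeMonoid ιB))) :
    H →ₗ[k] Module.End k (MonoidAlgebra H (FreeMonoid ιB)) where
  toFun h := Finsupp.lsum k (fun w => wordMapL P Q B s K w h) ∘ₗ
    (MonoidAlgebra.coeffLinearEquiv k).toLinearMap
  map_add' h h' := by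
    have heq : (fun w => wordMapL P Q B s K w (h + h'))
        = (fun w => wordMapL P Q B s K w h) + (fun w => wordMapL P Q B s K w h') := by
      funext w; simp [map_add]
    show Finsupp.lsum k _ ∘ₗ _ = _
    rw [heq, map_add]
    exact LinearMap.add_comp _ _ _
  map_smul' c h := by
    have heq : (fun w => wordMapL P Q B s K w (c • h))
        = c • (fun w => wordMapL P Q B s K w h) := by
      funext w; simp [map_smul]
    show Finsupp.lsum k _ ∘ₗ _ = _
    rw [heq, map_smul]
    exact LinearMap.smul_comp _ _ _

noncomputable def Gmap : ℕ → (H →ₗ[k] Module.End k (MonoidAlgebra H (FreeMonoid ιB)))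
  | 0 => extend P Q B s 0
  | n + 1 => extend P Q B s (Gmap n)

noncomputable def lam : H →ₗ[k] Module.End k (MonoidAlgebra H (FreeMonoid ιB)) where
  toFun h := (Finsupp.lsum k fun w =>
    (Gmap P Q B s w.length h) ∘ₗ (MonoidAlgebra.lsingle w : H →ₗ[k] MonoidAlgebra H (FreeMonoid ιB)))
      ∘ₗ (MonoidAlgebra.coeffLinearEquiv k).toLinearMap
  map_add' h h' := by
    have heq : (fun w => (Gmap P Q B s w.length (h + h')) ∘ₗ
          (MonoidAlgebra.lsingle w : H →ₗ[k] MonoidAlgebra H (FreeMonoid ιB)))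
        = (fun w => (Gmap P Q B s w.length h) ∘ₗ MonoidAlgebra.lsingle w)
          + (fun w => (Gmap P Q B s w.length h') ∘ₗ MonoidAlgebra.lsingle w) := by
      funext w; simp only [map_add, LinearMap.add_comp]; rfl
    show Finsupp.lsum k _ ∘ₗ _ = _
    rw [heq, map_add]
    exact LinearMap.add_comp _ _ _
  map_smul' c h := by
    have heq : (fun w => (Gmap P Q B s w.length (c • h)) ∘ₗ
          (MonoidAlgebra.lsingle w : H →ₗ[k] MonoidAlgebra H (FreeMonoid ιB)))
        = c • (fun w => (Gmap P Q B s w.length h) ∘ₗ MonoidAlgebra.lsingle w) := by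
      funext w; simp only [map_smul, LinearMap.smul_comp]; rfl
    show Finsupp.lsum k _ ∘ₗ _ = _
    rw [heq, map_smul]
    exact LinearMap.smul_comp _ _ _

theorem extend_single_nil (K : H →ₗ[k] Module.End k (MonoidAlgebra H (FreeMonoid ιB)))
    (h g : H) :
    extend P Q B s K h (MonoidAlgebra.single (1 : FreeMonoid ιB) g)
      = MonoidAlgebra.single (1 : FreeMonoid ιB) (h * g) := by
  show Finsupp.lsum k (fun w => wordMapL P Q B s K w h) (Finsupp.single 1 g) = _
  rw [Finsupp.lsum_single]
  rfl

theorem extend_single_cons (K : H →ₗ[k] Module.End k (MonoidAlgebra H (FreeMonoid ιB)))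
    (h g : H) (b : ιB) (w : FreeMonoid ιB) :
    extend P Q B s K h (MonoidAlgebra.single (FreeMonoid.of b * w) g)
      = bgen P Q B K (s (B b)) h (MonoidAlgebra.single w g) := by
  show Finsupp.lsum k (fun w => wordMapL P Q B s K w h) (Finsupp.single (FreeMonoid.of b * w) g)
    = _
  rw [Finsupp.lsum_single]
  rfl

theorem lam_single (h g : H) (w : FreeMonoid ιB) :
    lam P Q B s h (MonoidAlgebra.single w g) = Gmap P Q B s w.length h (MonoidAlgebra.single w g) := by
  show Finsupp.lsum k (fun w => (Gmap P Q B s w.length h) ∘ₗ MonoidAlgebra.lsingle w)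
    (Finsupp.single w g) = _
  rw [Finsupp.lsum_single]
  rfl

theorem ma_lhom_ext {N : Type*} [AddCommMonoid N] [Module k N]
    {φ ψ : MonoidAlgebra H (FreeMonoid ιB) →ₗ[k] N}
    (hφψ : ∀ (w : FreeMonoid ιB) (g : H),
      φ (MonoidAlgebra.single w g) = ψ (MonoidAlgebra.single w g)) :
    φ = ψ :=
  LinearMap.ext fun e => MonoidAlgebra.induction_linear e (by simp)
    (fun x y hx hy => by rw [map_add, map_add, hx, hy]) hφψ

end Fulcrum
namespace Fulcrum

variable {k H M V : Type*} [Field k] [Ring H] [HopfAlgebra k H]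
    [AddCommGroup M] [Module k M] [Module H M] [IsScalarTower k H M]
    [AddCommGroup V] [Module k V] {ιB : Type*}
variable (P : M →ₗ[k] H) (Q : M →ₗ[k] V) (B : Module.Basis ιB k V) (s : V →ₗ[k] M)

/-- The submodule of elements supported on words of length `≤ n`. -/
noncomputable def Supp (H : Type*) [Semiring H] [Module k H] (ιB : Type*) (n : ℕ) :
    Submodule k (MonoidAlgebra H (FreeMonoid ιB)) :=
  MonoidAlgebra.supported k H {w : FreeMonoid ιB | w.length ≤ n}

theorem single_mem_Supp {n : ℕ} {w : FreeMonoid ιB} (hw : w.length ≤ n) (g : H) :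
    MonoidAlgebra.single w g ∈ Supp (k := k) H ιB n :=
  Finsupp.single_mem_supported k g hw

theorem Supp_mono {m n : ℕ} (hmn : m ≤ n) :
    Supp (k := k) H ιB m ≤ Supp (k := k) H ιB n :=
  MonoidAlgebra.supported_mono (fun w hw => le_trans hw hmn)

theorem apply_supported {W : Type*} [AddCommMonoid W] [Module k W]
    {N : Submodule k W} {sset : Set (FreeMonoid ιB)}
    (F : MonoidAlgebra H (FreeMonoid ιB) →ₗ[k] W)
    (hF : ∀ w ∈ sset, ∀ g : H, F (MonoidAlgebra.single w g) ∈ N) :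
    ∀ e ∈ MonoidAlgebra.supported k H sset, F e ∈ N := by
  classical
  intro e he
  rw [MonoidAlgebra.mem_supported] at he
  have : F e = ∑ w ∈ e.coeff.support, F (MonoidAlgebra.single w (e.coeff w)) := by
    conv_lhs => rw [← MonoidAlgebra.sum_coeff_single e]
    rw [Finsupp.sum, map_sum]
  rw [this]
  exact Submodule.sum_mem N fun w hw => hF w (he hw) _

theorem eq_on_supported {W : Type*} [AddCommMonoid W] [Module k W]
    {sset : Set (FreeMonoid ιB)}
    (F₁ F₂ : MonoidAlgebra H (FreeMonoid ιB) →ₗ[k] W)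
    (hF : ∀ w ∈ sset, ∀ g : H, F₁ (MonoidAlgebra.single w g) = F₂ (MonoidAlgebra.single w g)) :
    ∀ e ∈ MonoidAlgebra.supported k H sset, F₁ e = F₂ e := by
  classical
  intro e he
  rw [MonoidAlgebra.mem_supported] at he
  have h1 : F₁ e = ∑ w ∈ e.coeff.support, F₁ (MonoidAlgebra.single w (e.coeff w)) := by
    conv_lhs => rw [← MonoidAlgebra.sum_coeff_single e]
    rw [Finsupp.sum, map_sum]
  have h2 : F₂ e = ∑ w ∈ e.coeff.support, F₂ (MonoidAlgebra.single w (e.coeff w)) := by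
    conv_lhs => rw [← MonoidAlgebra.sum_coeff_single e]
    rw [Finsupp.sum, map_sum]
  rw [h1, h2]
  exact Finset.sum_congr rfl fun w hw => hF w (he hw) _

theorem emb_mul_mem {n : ℕ} (v : V) :
    ∀ e ∈ Supp (k := k) H ιB n, emb (H := H) B v * e ∈ Supp (k := k) H ιB (n + 1) := by
  intro e he
  rw [emb_apply, Finsupp.sum_mul]
  refine Submodule.finsuppSum_mem _ _ _ _ fun b hb => ?_
  refine apply_supported (N := Supp (k := k) H ιB (n+1))
    (LinearMap.mulLeft k (MonoidAlgebra.single (FreeMonoid.of b) (algebraMap k H (B.repr v b))))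
    ?_ e he
  intro w hw g
  have hw' : w.length ≤ n := hw
  rw [LinearMap.mulLeft_apply, MonoidAlgebra.single_mul_single]
  exact single_mem_Supp (by simp [FreeMonoid.length_mul]; omega) _

end Fulcrum
namespace Fulcrum

variable {k H M V : Type*} [Field k] [Ring H] [HopfAlgebra k H]
    [AddCommGroup M] [Module k M] [Module H M] [IsScalarTower k H M]
    [AddCommGroup V] [Module k V] {ιB : Type*}
variable (P : M →ₗ[k] H) (Q : M →ₗ[k] V) (B : Module.Basis ιB k V) (s : V →ₗ[k] M)

theorem word_cases (w : FreeMonoid ιB) : w = 1 ∨ ∃ b w', w = FreeMonoid.of b * w' := by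
  cases h : FreeMonoid.toList w with
  | nil => left; rw [← FreeMonoid.ofList_toList w, h]; rfl
  | cons b l =>
      right
      exact ⟨b, FreeMonoid.ofList l, by
        rw [← FreeMonoid.ofList_toList w, h, FreeMonoid.ofList_cons]⟩

theorem length_cons (b : ιB) (w : FreeMonoid ιB) :
    (FreeMonoid.of b * w).length = w.length + 1 := by
  simp [FreeMonoid.length_mul, Nat.add_comm]

/-- If `K` preserves the length filtration, then `rho K x` raises it by at most one. -/
theorem rho_mem {K : H →ₗ[k] Module.End k (MonoidAlgebra H (FreeMonoid ιB))}
    (hK : ∀ (h : H) (w : FreeMonoid ιB) (g : H),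
      K h (MonoidAlgebra.single w g) ∈ Supp (k := k) H ιB w.length)
    (x : M) (m : ℕ) : ∀ e ∈ Supp (k := k) H ιB m,
      rho P Q B K x e ∈ Supp (k := k) H ιB (m + 1) := by
  intro e he
  rw [rho_apply]
  refine add_mem ?_ (emb_mul_mem B _ e he)
  refine apply_supported (N := Supp (k := k) H ιB (m+1)) (K (P x)) ?_ e he
  intro w hw g
  exact Supp_mono (k := k) (Nat.le_succ_of_le hw) (hK (P x) w g)

theorem Gmap_supp : ∀ (n : ℕ) (h : H) (w : FreeMonoid ιB) (g : H),
    Gmap P Q B s n h (MonoidAlgebra.single w g) ∈ Supp (k := k) H ιB w.length := by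
  intro n
  induction n with
  | zero =>
      intro h w g
      rcases word_cases w with rfl | ⟨b, w', rfl⟩
      · rw [show Gmap P Q B s 0 = extend P Q B s 0 from rfl, extend_single_nil]
        exact single_mem_Supp (le_refl _) _
      · rw [show Gmap P Q B s 0 = extend P Q B s 0 from rfl, extend_single_cons]
        have hz : ∀ z : H ⊗[k] H,
            (LinearMap.mul' k (Module.End k (MonoidAlgebra H (FreeMonoid ιB))))
              ((TensorProduct.map ((rho P Q B (0 : H →ₗ[k] Module.End k
                  (MonoidAlgebra H (FreeMonoid ιB)))) ∘ₗ actL k (s (B b)))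
                (0 : H →ₗ[k] Module.End k (MonoidAlgebra H (FreeMonoid ιB)))) z)
              (MonoidAlgebra.single w' g) ∈ Supp (k := k) H ιB (FreeMonoid.of b * w').length := by
          intro z
          induction z using TensorProduct.induction_on with
          | zero => simp only [map_zero, LinearMap.zero_apply]; exact zero_mem _
          | tmul a a' =>
              simp only [TensorProduct.map_tmul, LinearMap.mul'_apply, Module.End.mul_apply,
                LinearMap.zero_apply, map_zero]
              exact zero_mem _
          | add z1 z2 ih1 ih2 =>
              rw [map_add, map_add, LinearMap.add_apply]
              exact add_mem ih1 ih2
        exact hz (Coalgebra.comul h)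
  | succ n ih =>
      intro h w g
      rcases word_cases w with rfl | ⟨b, w', rfl⟩
      · rw [show Gmap P Q B s (n+1) = extend P Q B s (Gmap P Q B s n) from rfl,
          extend_single_nil]
        exact single_mem_Supp (le_refl _) _
      · rw [show Gmap P Q B s (n+1) = extend P Q B s (Gmap P Q B s n) from rfl,
          extend_single_cons]
        rw [length_cons]
        have hz : ∀ z : H ⊗[k] H,
            (LinearMap.mul' k (Module.End k (MonoidAlgebra H (FreeMonoid ιB))))
              ((TensorProduct.map ((rho P Q B (Gmap P Q B s n)) ∘ₗ actL k (s (B b)))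
                (Gmap P Q B s n)) z)
              (MonoidAlgebra.single w' g) ∈ Supp (k := k) H ιB (w'.length + 1) := by
          intro z
          induction z using TensorProduct.induction_on with
          | zero => simp only [map_zero, LinearMap.zero_apply]; exact zero_mem _
          | tmul a a' =>
              simp only [TensorProduct.map_tmul, LinearMap.mul'_apply, Module.End.mul_apply,
                LinearMap.comp_apply]
              exact rho_mem P Q B (fun h w g => ih h w g) _ _ _ (ih a' w' g)
          | add z1 z2 ih1 ih2 =>
              rw [map_add, map_add, LinearMap.add_apply]
              exact add_mem ih1 ih2
        exact hz (Coalgebra.comul h)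

theorem bgen_congr {K₁ K₂ : H →ₗ[k] Module.End k (MonoidAlgebra H (FreeMonoid ιB))} {n : ℕ}
    (hval : ∀ (h : H) (u : FreeMonoid ιB) (g : H), u.length ≤ n →
      K₁ h (MonoidAlgebra.single u g) = K₂ h (MonoidAlgebra.single u g))
    (hsupp : ∀ (h : H) (u : FreeMonoid ιB) (g : H),
      K₂ h (MonoidAlgebra.single u g) ∈ Supp (k := k) H ιB u.length)
    (x : M) (h g : H) (w : FreeMonoid ιB) (hw : w.length ≤ n) :
    bgen P Q B K₁ x h (MonoidAlgebra.single w g) = bgen P Q B K₂ x h (MonoidAlgebra.single w g) := by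
  show (LinearMap.mul' k _) ((TensorProduct.map ((rho P Q B K₁) ∘ₗ actL k x) K₁)
      (Coalgebra.comul h)) (MonoidAlgebra.single w g)
    = (LinearMap.mul' k _) ((TensorProduct.map ((rho P Q B K₂) ∘ₗ actL k x) K₂)
      (Coalgebra.comul h)) (MonoidAlgebra.single w g)
  induction (Coalgebra.comul (R := k) h : H ⊗[k] H) using TensorProduct.induction_on with
  | zero => simp
  | tmul a a' =>
      simp only [TensorProduct.map_tmul, LinearMap.mul'_apply, Module.End.mul_apply,
        LinearMap.comp_apply]
      rw [hval a' w g hw]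
      have hmem : K₂ a' (MonoidAlgebra.single w g) ∈ Supp (k := k) H ιB n :=
        Supp_mono (k := k) hw (hsupp a' w g)
      have h1 : rho P Q B K₁ (actL k x a) (K₂ a' (MonoidAlgebra.single w g))
          = rho P Q B K₂ (actL k x a) (K₂ a' (MonoidAlgebra.single w g)) := by
        refine eq_on_supported (rho P Q B K₁ (actL k x a)) (rho P Q B K₂ (actL k x a)) ?_ _ hmem
        intro u hu g'
        rw [rho_apply, rho_apply, hval _ u g' hu]
      exact h1
  | add z1 z2 ih1 ih2 =>
      simp only [map_add, LinearMap.add_apply, ih1, ih2]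

theorem Gmap_agree : ∀ (n : ℕ) (w : FreeMonoid ιB), w.length ≤ n → ∀ (h g : H),
    Gmap P Q B s (n+1) h (MonoidAlgebra.single w g) = Gmap P Q B s n h (MonoidAlgebra.single w g) := by
  intro n
  induction n with
  | zero =>
      intro w hw h g
      have : w = 1 := FreeMonoid.length_eq_zero.mp (Nat.le_zero.mp hw)
      subst this
      rw [show Gmap P Q B s 1 = extend P Q B s (Gmap P Q B s 0) from rfl,
        show Gmap P Q B s 0 = extend P Q B s 0 from rfl, extend_single_nil, extend_single_nil]
  | succ n ih =>
      intro w hw h g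
      rcases word_cases w with rfl | ⟨b, w', rfl⟩
      · rw [show Gmap P Q B s (n+2) = extend P Q B s (Gmap P Q B s (n+1)) from rfl,
          show Gmap P Q B s (n+1) = extend P Q B s (Gmap P Q B s n) from rfl,
          extend_single_nil, extend_single_nil]
      · rw [length_cons] at hw
        rw [show Gmap P Q B s (n+2) = extend P Q B s (Gmap P Q B s (n+1)) from rfl,
          show Gmap P Q B s (n+1) = extend P Q B s (Gmap P Q B s n) from rfl,
          extend_single_cons, extend_single_cons]
        exact bgen_congr P Q B (fun h u g hu => ih u hu h g)
          (fun h u g => Gmap_supp P Q B s n h u g) (s (B b)) h g w' (Nat.le_of_succ_le_succ hw)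

theorem Gmap_stab : ∀ (n m : ℕ), n ≤ m → ∀ (w : FreeMonoid ιB), w.length ≤ n → ∀ (h g : H),
    Gmap P Q B s m h (MonoidAlgebra.single w g) = Gmap P Q B s n h (MonoidAlgebra.single w g) := by
  intro n m hnm
  induction m, hnm using Nat.le_induction with
  | base => intro w hw h g; rfl
  | succ m hnm ih =>
      intro w hw h g
      rw [Gmap_agree P Q B s m w (le_trans hw hnm) h g]
      exact ih w hw h g

theorem lam_supp (h : H) (w : FreeMonoid ιB) (g : H) :
    lam P Q B s h (MonoidAlgebra.single w g) ∈ Supp (k := k) H ιB w.length := by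
  rw [lam_single]; exact Gmap_supp P Q B s _ h w g

theorem lam_nil (h g : H) :
    lam P Q B s h (MonoidAlgebra.single (1 : FreeMonoid ιB) g)
      = MonoidAlgebra.single (1 : FreeMonoid ιB) (h * g) := by
  rw [lam_single]
  exact extend_single_nil P Q B s 0 h g

theorem lam_cons (h g : H) (b : ιB) (w : FreeMonoid ιB) :
    lam P Q B s h (MonoidAlgebra.single (FreeMonoid.of b * w) g)
      = bgen P Q B (lam P Q B s) (s (B b)) h (MonoidAlgebra.single w g) := by
  rw [lam_single, length_cons,
    show Gmap P Q B s (w.length + 1) = extend P Q B s (Gmap P Q B s w.length) from rfl,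
    extend_single_cons]
  refine bgen_congr P Q B ?_ (fun h u g => lam_supp P Q B s h u g) (s (B b)) h g w (le_refl _)
  intro h u g hu
  rw [lam_single]
  exact Gmap_stab P Q B s u.length w.length hu u (le_refl _) h g

end Fulcrum
namespace Fulcrum

open Coalgebra

variable {k H M V : Type*} [Field k] [Ring H] [HopfAlgebra k H]
    [AddCommGroup M] [Module k M] [Module H M] [IsScalarTower k H M]
    [AddCommGroup V] [Module k V] {ιB : Type*}
variable (P : M →ₗ[k] H) (Q : M →ₗ[k] V) (B : Module.Basis ιB k V) (s : V →ₗ[k] M)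

theorem act_smul_comm (c : k) (h : H) (x : M) : h • (c • x) = c • (h • x) := by
  rw [← algebraMap_smul H c x, ← mul_smul, ← Algebra.commutes, mul_smul, algebraMap_smul]

/-- The key Hopf identity `Σ (h₁ a S(h₂)) h₃ = h a`. -/
theorem hopf1 (a h : H) :
    LinearMap.mul' k H
      ((TensorProduct.map (adjL k a) (LinearMap.id : H →ₗ[k] H)) (Coalgebra.comul h))
    = h * a := by
  classical
  set r := Coalgebra.Repr.arbitrary k h with hr
  set a₁ : (i : r.ι) → Coalgebra.Repr k (r.left i) (H × H) :=
    fun i => Coalgebra.Repr.arbitrary k (r.left i) with ha₁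
  set a₂ : (i : r.ι) → Coalgebra.Repr k (r.right i) (H × H) :=
    fun i => Coalgebra.Repr.arbitrary k (r.right i) with ha₂
  have key := Coalgebra.sum_tmul_tmul_eq (R := k) r a₁ a₂
  set T3 : H ⊗[k] (H ⊗[k] H) →ₗ[k] H :=
    LinearMap.mul' k H ∘ₗ TensorProduct.map (LinearMap.mulRight k a)
      (LinearMap.mul' k H ∘ₗ TensorProduct.map (HopfAlgebra.antipode (R := k))
        (LinearMap.id : H →ₗ[k] H)) with hT3def
  have hT3 : ∀ u v w : H, T3 (u ⊗ₜ[k] (v ⊗ₜ[k] w))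
      = (u * a) * (HopfAlgebra.antipode (R := k) v * w) := by
    intro u v w
    simp [hT3def, LinearMap.mul'_apply]
  have happ := congrArg T3 key
  simp only [map_sum, hT3] at happ
  have hrhs : ∀ i ∈ r.index, ∑ j ∈ (a₂ i).index,
      (r.left i * a) * (HopfAlgebra.antipode (R := k) ((a₂ i).left j) * (a₂ i).right j)
      = Coalgebra.counit (R := k) (r.right i) • (r.left i * a) := by
    intro i _
    rw [← Finset.mul_sum, HopfAlgebra.sum_antipode_mul_eq_algebraMap_counit (a₂ i), ← Algebra.commutes,
      ← Algebra.smul_def]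
  have hlhs : LinearMap.mul' k H
      ((TensorProduct.map (adjL k a) (LinearMap.id : H →ₗ[k] H)) (Coalgebra.comul h))
      = ∑ i ∈ r.index, adjL k a (r.left i) * r.right i := by
    rw [← r.eq, map_sum, map_sum]
    simp [LinearMap.mul'_apply]
  have hadjL : ∀ i ∈ r.index, adjL k a (r.left i) * (r.right i) =
      ∑ j ∈ (a₁ i).index, ((a₁ i).left j * a)
        * (HopfAlgebra.antipode (R := k) ((a₁ i).right j) * r.right i) := by
    intro i _
    show (LinearMap.mul' k H ∘ₗ TensorProduct.map (LinearMap.mulRight k a)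
        (HopfAlgebra.antipode (R := k)) ∘ₗ Coalgebra.comul) (r.left i) * r.right i = _
    rw [LinearMap.comp_apply, LinearMap.comp_apply, ← (a₁ i).eq]
    rw [map_sum, map_sum, Finset.sum_mul]
    refine Finset.sum_congr rfl fun j _ => ?_
    simp [LinearMap.mul'_apply, mul_assoc]
  have hcounit : ∑ i ∈ r.index, Coalgebra.counit (R := k) (r.right i) • r.left i = h := by
    have h1 := Coalgebra.sum_tmul_counit_eq (R := k) r
    have h2 := congrArg (TensorProduct.rid k H) h1
    rw [map_sum] at h2
    simp only [TensorProduct.rid_tmul, one_smul] at h2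
    exact h2
  calc (LinearMap.mul' k H
        ((TensorProduct.map (adjL k a) (LinearMap.id : H →ₗ[k] H)) (Coalgebra.comul h)))
      = ∑ i ∈ r.index, adjL k a (r.left i) * r.right i := hlhs
    _ = ∑ i ∈ r.index, ∑ j ∈ (a₁ i).index, ((a₁ i).left j * a)
        * (HopfAlgebra.antipode (R := k) ((a₁ i).right j) * r.right i) :=
      Finset.sum_congr rfl hadjL
    _ = ∑ i ∈ r.index, ∑ j ∈ (a₂ i).index,
        (r.left i * a) * (HopfAlgebra.antipode (R := k) ((a₂ i).left j) * (a₂ i).right j) := happ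
    _ = ∑ i ∈ r.index, Coalgebra.counit (R := k) (r.right i) • (r.left i * a) :=
      Finset.sum_congr rfl hrhs
    _ = (∑ i ∈ r.index, Coalgebra.counit (R := k) (r.right i) • r.left i) * a := by
      rw [Finset.sum_mul]
      exact Finset.sum_congr rfl fun i _ => (smul_mul_assoc _ _ _).symm
    _ = h * a := by rw [hcounit]

/-- `bgen` as a linear map in the `M`-variable. -/
noncomputable def bgenL (K : H →ₗ[k] Module.End k (MonoidAlgebra H (FreeMonoid ιB))) :
    M →ₗ[k] H →ₗ[k] Module.End k (MonoidAlgebra H (FreeMonoid ιB)) where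
  toFun x := bgen P Q B K x
  map_add' x y := by
    refine LinearMap.ext fun h => LinearMap.ext fun e => ?_
    show (LinearMap.mul' k _) ((TensorProduct.map ((rho P Q B K) ∘ₗ actL k (x + y)) K)
        (Coalgebra.comul h)) e = _
    have key : ∀ z : H ⊗[k] H,
        (LinearMap.mul' k (Module.End k (MonoidAlgebra H (FreeMonoid ιB))))
          ((TensorProduct.map ((rho P Q B K) ∘ₗ actL k (x + y)) K) z) e
        = (LinearMap.mul' k _) ((TensorProduct.map ((rho P Q B K) ∘ₗ actL k x) K) z) e
          + (LinearMap.mul' k _) ((TensorProduct.map ((rho P Q B K) ∘ₗ actL k y) K) z) e := by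
      intro z
      induction z using TensorProduct.induction_on with
      | zero => simp
      | tmul c c' =>
          simp only [TensorProduct.map_tmul, LinearMap.mul'_apply, Module.End.mul_apply,
            LinearMap.comp_apply, actL_apply, smul_add, map_add, LinearMap.add_apply]
      | add z1 z2 ih1 ih2 => simp only [map_add, LinearMap.add_apply, ih1, ih2]; abel
    exact key (Coalgebra.comul h)
  map_smul' c x := by
    refine LinearMap.ext fun h => LinearMap.ext fun e => ?_
    show (LinearMap.mul' k _) ((TensorProduct.map ((rho P Q B K) ∘ₗ actL k (c • x)) K)
        (Coalgebra.comul h)) e = _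
    have key : ∀ z : H ⊗[k] H,
        (LinearMap.mul' k (Module.End k (MonoidAlgebra H (FreeMonoid ιB))))
          ((TensorProduct.map ((rho P Q B K) ∘ₗ actL k (c • x)) K) z) e
        = c • ((LinearMap.mul' k _) ((TensorProduct.map ((rho P Q B K) ∘ₗ actL k x) K) z) e) := by
      intro z
      induction z using TensorProduct.induction_on with
      | zero => simp
      | tmul d d' =>
          simp only [TensorProduct.map_tmul, LinearMap.mul'_apply, Module.End.mul_apply,
            LinearMap.comp_apply, actL_apply, act_smul_comm, map_smul, LinearMap.smul_apply]
      | add z1 z2 ih1 ih2 => simp only [map_add, LinearMap.add_apply, ih1, ih2, smul_add]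
    exact key (Coalgebra.comul h)

/-- Commuting `lam h` past left multiplication by a degree-one basis monomial. -/
theorem lam_emb_op (h : H) (b : ιB) :
    (lam P Q B s h) ∘ₗ LinearMap.mulLeft k
        (MonoidAlgebra.single (FreeMonoid.of b) (1 : H))
      = bgen P Q B (lam P Q B s) (s (B b)) h := by
  refine ma_lhom_ext fun w g => ?_
  show lam P Q B s h ((MonoidAlgebra.single (FreeMonoid.of b) (1 : H))
      * (MonoidAlgebra.single w g)) = _
  rw [MonoidAlgebra.single_mul_single, one_mul]
  exact lam_cons P Q B s h g b w

theorem lam_emb_single (h : H) (b : ιB) (e : MonoidAlgebra H (FreeMonoid ιB)) :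
    lam P Q B s h ((MonoidAlgebra.single (FreeMonoid.of b) (1 : H)) * e)
      = bgen P Q B (lam P Q B s) (s (B b)) h e :=
  LinearMap.congr_fun (lam_emb_op P Q B s h b) e

end Fulcrum
namespace Fulcrum

open Coalgebra

variable {k H M V : Type*} [Field k] [Ring H] [HopfAlgebra k H]
    [AddCommGroup M] [Module k M] [Module H M] [IsScalarTower k H M]
    [AddCommGroup V] [Module k V] {ιB : Type*}
variable (P : M →ₗ[k] H) (Q : M →ₗ[k] V) (B : Module.Basis ιB k V) (s : V →ₗ[k] M)

theorem s_repr (v : V) : s v = (B.repr v).sum fun b c => c • s (B b) := by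
  conv_lhs => rw [← B.linearCombination_repr v]
  rw [Finsupp.linearCombination_apply]
  try rw [map_finsuppSum]
  try exact Finsupp.sum_congr fun b _ => by rw [map_smul]

theorem emb_repr (v : V) : emb (H := H) B v
    = (B.repr v).sum fun b c => c • MonoidAlgebra.single (FreeMonoid.of b) (1 : H) := by
  rw [emb_apply]
  refine Finsupp.sum_congr fun b _ => ?_
  rw [Algebra.algebraMap_eq_smul_one, MonoidAlgebra.smul_single]
  try rfl

/-- The `s`-part of the straightening law, for arbitrary `v` and `e`. -/
theorem lam_emb_mul (h : H) (v : V) (e : MonoidAlgebra H (FreeMonoid ιB)) :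
    lam P Q B s h (emb (H := H) B v * e)
      = bgen P Q B (lam P Q B s) (s v) h e := by
  rw [emb_repr, Finsupp.sum_mul, map_finsuppSum]
  set F : M →ₗ[k] MonoidAlgebra H (FreeMonoid ιB) :=
    (LinearMap.applyₗ e) ∘ₗ (LinearMap.applyₗ h) ∘ₗ (bgenL P Q B (lam P Q B s)) with hF
  have h1 : ∀ y : M, bgen P Q B (lam P Q B s) y h e = F y := fun y => rfl
  rw [h1, s_repr B s v, map_finsuppSum]
  refine Finsupp.sum_congr fun b _ => ?_
  rw [map_smul, ← h1, smul_mul_assoc, map_smul, lam_emb_single]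

/-- The straightening law `Λ_h ∘ ρ_x = Σ ρ(h₁•x) Λ_{h₂}`, given multiplicativity at `e`. -/
theorem IL_core (f : H →ₗ[k] M)
    (hadj : ∀ h a : H, h • f a = f (adjL k a h))
    (hPf : ∀ a, P (f a) = a) (hQf : ∀ a, Q (f a) = 0)
    (hPQ : ∀ x, f (P x) + s (Q x) = x)
    (x : M) (h : H) (e : MonoidAlgebra H (FreeMonoid ιB))
    (hM : ∀ h h' : H, lam P Q B s h (lam P Q B s h' e) = lam P Q B s (h * h') e) :
    lam P Q B s h (rho P Q B (lam P Q B s) x e) = bgen P Q B (lam P Q B s) x h e := by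
  have hf : ∀ a : H, lam P Q B s h (lam P Q B s a e)
      = bgen P Q B (lam P Q B s) (f a) h e := by
    intro a
    have key : ∀ z : H ⊗[k] H,
        (LinearMap.mul' k (Module.End k (MonoidAlgebra H (FreeMonoid ιB))))
          ((TensorProduct.map ((rho P Q B (lam P Q B s)) ∘ₗ actL k (f a)) (lam P Q B s)) z) e
        = lam P Q B s
            (LinearMap.mul' k H ((TensorProduct.map (adjL k a) (LinearMap.id : H →ₗ[k] H)) z))
            e := by
      intro z
      induction z using TensorProduct.induction_on with
      | zero => simp
      | tmul c c' =>
          simp only [TensorProduct.map_tmul, LinearMap.mul'_apply, Module.End.mul_apply,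
            LinearMap.comp_apply, LinearMap.id_apply, actL_apply]
          rw [hadj c a, rho_apply, hPf, hQf, map_zero, zero_mul, add_zero, hM]
      | add z1 z2 ih1 ih2 => simp only [map_add, LinearMap.add_apply, ih1, ih2]
    have hkey := key (Coalgebra.comul h)
    rw [hopf1] at hkey
    rw [hM h a]
    exact hkey.symm
  rw [rho_apply, map_add, hf (P x), lam_emb_mul P Q B s h (Q x)]
  have h4 : bgenL P Q B (lam P Q B s) (f (P x)) + bgenL P Q B (lam P Q B s) (s (Q x))
      = bgenL P Q B (lam P Q B s) x := by
    rw [← map_add, hPQ]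
  have h5 := LinearMap.congr_fun (LinearMap.congr_fun h4 h) e
  simp only [LinearMap.add_apply] at h5
  exact h5

/-- `Λ 1 = id` on singles. -/
theorem lam_one (hPs : ∀ v, P (s v) = 0) (hQs : ∀ v, Q (s v) = v) :
    ∀ (w : FreeMonoid ιB) (g : H),
      lam P Q B s 1 (MonoidAlgebra.single w g) = MonoidAlgebra.single w g := by
  intro w
  induction w using FreeMonoid.inductionOn' with
  | one => intro g; rw [lam_nil, one_mul]
  | of_mul b w ih =>
      intro g
      rw [lam_cons]
      show (LinearMap.mul' k (Module.End k (MonoidAlgebra H (FreeMonoid ιB))))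
        ((TensorProduct.map ((rho P Q B (lam P Q B s)) ∘ₗ actL k (s (B b))) (lam P Q B s))
          (Coalgebra.comul (1 : H))) (MonoidAlgebra.single w g) = _
      rw [Bialgebra.comul_one, Algebra.TensorProduct.one_def]
      simp only [TensorProduct.map_tmul, LinearMap.mul'_apply, Module.End.mul_apply,
        LinearMap.comp_apply, actL_apply]
      rw [ih, one_smul, rho_apply, hPs, hQs, map_zero, LinearMap.zero_apply, zero_add,
        emb_basis, MonoidAlgebra.single_mul_single, one_mul]

/-- Main induction: `Λ` is multiplicative. -/
theorem master (f : H →ₗ[k] M)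
    (hadj : ∀ h a : H, h • f a = f (adjL k a h))
    (hPf : ∀ a, P (f a) = a) (hQf : ∀ a, Q (f a) = 0)
    (hPQ : ∀ x, f (P x) + s (Q x) = x) :
    ∀ (n : ℕ) (w : FreeMonoid ιB), w.length ≤ n → ∀ (g h h' : H),
      lam P Q B s h (lam P Q B s h' (MonoidAlgebra.single w g))
        = lam P Q B s (h * h') (MonoidAlgebra.single w g) := by
  intro n
  induction n with
  | zero =>
      intro w hw g h h'
      have : w = 1 := FreeMonoid.length_eq_zero.mp (Nat.le_zero.mp hw)
      subst this
      rw [lam_nil, lam_nil, lam_nil, mul_assoc]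
  | succ n ih =>
      intro w hw g h h'
      rcases word_cases w with rfl | ⟨b, w', rfl⟩
      · rw [lam_nil, lam_nil, lam_nil, mul_assoc]
      · rw [length_cons] at hw
        have hw' : w'.length ≤ n := Nat.le_of_succ_le_succ hw
        -- multiplicativity on elements of Supp n
        have hMsupp : ∀ e ∈ Supp (k := k) H ιB n, ∀ h h' : H,
            lam P Q B s h (lam P Q B s h' e) = lam P Q B s (h * h') e := by
          intro e he h h'
          exact eq_on_supported ((lam P Q B s h) ∘ₗ (lam P Q B s h'))
            (lam P Q B s (h * h')) (fun u hu g' => ih u hu g' h h') e he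
        set x₀ := s (B b) with hx₀
        have claim : ∀ z : H ⊗[k] H,
            lam P Q B s h ((LinearMap.mul' k (Module.End k (MonoidAlgebra H (FreeMonoid ιB))))
              ((TensorProduct.map ((rho P Q B (lam P Q B s)) ∘ₗ actL k x₀) (lam P Q B s)) z)
              (MonoidAlgebra.single w' g))
            = (LinearMap.mul' k (Module.End k (MonoidAlgebra H (FreeMonoid ιB))))
              ((TensorProduct.map ((rho P Q B (lam P Q B s)) ∘ₗ actL k x₀) (lam P Q B s))
                (Coalgebra.comul h * z))
              (MonoidAlgebra.single w' g) := by
          intro z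
          induction z using TensorProduct.induction_on with
          | zero => simp
          | tmul a a' =>
              simp only [TensorProduct.map_tmul, LinearMap.mul'_apply, Module.End.mul_apply,
                LinearMap.comp_apply, actL_apply]
              set e₀ := lam P Q B s a' (MonoidAlgebra.single w' g) with he₀
              have he₀mem : e₀ ∈ Supp (k := k) H ιB n :=
                Supp_mono (k := k) hw' (lam_supp P Q B s a' w' g)
              have hMe₀ : ∀ h h' : H, lam P Q B s h (lam P Q B s h' e₀)
                  = lam P Q B s (h * h') e₀ := fun h h' => hMsupp e₀ he₀mem h h'
              rw [IL_core P Q B s f hadj hPf hQf hPQ (a • x₀) h e₀ hMe₀]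
              -- now both sides are values of `map (..) (..)` on `comul h * (a ⊗ a')`-type terms
              show (LinearMap.mul' k (Module.End k (MonoidAlgebra H (FreeMonoid ιB))))
                ((TensorProduct.map ((rho P Q B (lam P Q B s)) ∘ₗ actL k (a • x₀))
                  (lam P Q B s)) (Coalgebra.comul h)) e₀ = _
              have claim2 : ∀ y : H ⊗[k] H,
                  (LinearMap.mul' k (Module.End k (MonoidAlgebra H (FreeMonoid ιB))))
                    ((TensorProduct.map ((rho P Q B (lam P Q B s)) ∘ₗ actL k (a • x₀))
                      (lam P Q B s)) y) e₀
                  = (LinearMap.mul' k (Module.End k (MonoidAlgebra H (FreeMonoid ιB))))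
                    ((TensorProduct.map ((rho P Q B (lam P Q B s)) ∘ₗ actL k x₀)
                      (lam P Q B s)) (y * (a ⊗ₜ[k] a')))
                    (MonoidAlgebra.single w' g) := by
                intro y
                induction y using TensorProduct.induction_on with
                | zero => simp
                | tmul c c' =>
                    rw [Algebra.TensorProduct.tmul_mul_tmul]
                    simp only [TensorProduct.map_tmul, LinearMap.mul'_apply, Module.End.mul_apply,
                      LinearMap.comp_apply, actL_apply]
                    rw [he₀, ih w' hw' g c' a', ← mul_smul]
                | add y1 y2 ihy1 ihy2 =>
                    rw [add_mul]
                    simp only [map_add, LinearMap.add_apply, ihy1, ihy2]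
              exact claim2 (Coalgebra.comul h)
          | add z1 z2 ihz1 ihz2 =>
              rw [mul_add]
              simp only [map_add, LinearMap.add_apply, map_add, ihz1, ihz2]
        rw [lam_cons, lam_cons]
        show lam P Q B s h ((LinearMap.mul' k (Module.End k (MonoidAlgebra H (FreeMonoid ιB))))
            ((TensorProduct.map ((rho P Q B (lam P Q B s)) ∘ₗ actL k x₀) (lam P Q B s))
              (Coalgebra.comul h'))
            (MonoidAlgebra.single w' g)) = _
        rw [claim (Coalgebra.comul h'), ← Bialgebra.comul_mul]
        rfl

end Fulcrum
namespace Fulcrum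

open Coalgebra

variable {k H M V : Type*} [Field k] [Ring H] [HopfAlgebra k H]
    [AddCommGroup M] [Module k M] [Module H M] [IsScalarTower k H M]
    [AddCommGroup V] [Module k V] {ιB : Type*}
variable (P : M →ₗ[k] H) (Q : M →ₗ[k] V) (B : Module.Basis ιB k V) (s : V →ₗ[k] M)

section Ops

variable (f : H →ₗ[k] M)
    (hadj : ∀ h a : H, h • f a = f (adjL k a h))
    (hPf : ∀ a, P (f a) = a) (hQf : ∀ a, Q (f a) = 0)
    (hPs : ∀ v, P (s v) = 0) (hQs : ∀ v, Q (s v) = v)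
    (hPQ : ∀ x, f (P x) + s (Q x) = x)

include hadj hPf hQf hPQ in
theorem lam_mul_op (h h' : H) :
    (lam P Q B s h) * (lam P Q B s h') = lam P Q B s (h * h') := by
  refine ma_lhom_ext fun w g => ?_
  show lam P Q B s h (lam P Q B s h' (MonoidAlgebra.single w g)) = _
  exact master P Q B s f hadj hPf hQf hPQ w.length w le_rfl g h h'

include hPs hQs in
theorem lam_one_op : lam P Q B s (1 : H) = (1 : Module.End k (MonoidAlgebra H (FreeMonoid ιB))) := by
  refine ma_lhom_ext fun w g => ?_
  show lam P Q B s 1 (MonoidAlgebra.single w g) = MonoidAlgebra.single w g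
  exact lam_one P Q B s hPs hQs w g

include hadj hPf hQf hPQ in
theorem IL_op (x : M) (h : H) :
    (lam P Q B s h) * (rho P Q B (lam P Q B s) x) = bgen P Q B (lam P Q B s) x h := by
  refine ma_lhom_ext fun w g => ?_
  show lam P Q B s h (rho P Q B (lam P Q B s) x (MonoidAlgebra.single w g)) = _
  exact IL_core P Q B s f hadj hPf hQf hPQ x h (MonoidAlgebra.single w g)
    (fun h h' => master P Q B s f hadj hPf hQf hPQ w.length w le_rfl g h h')

include hPf hQf in
theorem rho_f (a : H) : rho P Q B (lam P Q B s) (f a) = lam P Q B s a := by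
  refine LinearMap.ext fun e => ?_
  rw [rho_apply, hPf, hQf, map_zero, zero_mul, add_zero]

include hPs hQs in
theorem rho_s (v : V) :
    rho P Q B (lam P Q B s) (s v) = LinearMap.mulLeft k (emb (H := H) B v) := by
  refine LinearMap.ext fun e => ?_
  rw [rho_apply, hPs, hQs, map_zero, LinearMap.zero_apply, zero_add]
  rfl

include hadj hPf hQf hPs hQs hPQ in
theorem theta0_rel : ∀ u v' : TensorAlgebra k M, fulcrumRel k f u v' →
    TensorAlgebra.lift k (rho P Q B (lam P Q B s)) u
      = TensorAlgebra.lift k (rho P Q B (lam P Q B s)) v' := by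
  intro u v' hrel
  rcases hrel with ⟨h, h', rfl, rfl⟩ | ⟨rfl, rfl⟩ | ⟨h, x, rfl, rfl⟩
  · rw [map_mul]
    simp only [TensorAlgebra.lift_ι_apply]
    rw [rho_f P Q B s f hPf hQf, rho_f P Q B s f hPf hQf, rho_f P Q B s f hPf hQf]
    exact lam_mul_op P Q B s f hadj hPf hQf hPQ h h'
  · simp only [TensorAlgebra.lift_ι_apply, map_one]
    rw [rho_f P Q B s f hPf hQf]
    exact lam_one_op P Q B s hPs hQs
  · rw [map_mul]
    simp only [TensorAlgebra.lift_ι_apply]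
    rw [rho_f P Q B s f hPf hQf]
    rw [IL_op P Q B s f hadj hPf hQf hPQ x h]
    -- now compute θ₀ (commRHS k f x h)
    show _ = TensorAlgebra.lift k (rho P Q B (lam P Q B s))
      ((LinearMap.mul' k (TensorAlgebra k M)
        ((TensorProduct.map ((TensorAlgebra.ι k (M := M)) ∘ₗ actL k x)
          ((TensorAlgebra.ι k (M := M)) ∘ₗ f)) (Coalgebra.comul h))))
    have key : ∀ z : H ⊗[k] H,
        TensorAlgebra.lift k (rho P Q B (lam P Q B s))
          ((LinearMap.mul' k (TensorAlgebra k M))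
            ((TensorProduct.map ((TensorAlgebra.ι k (M := M)) ∘ₗ actL k x)
              ((TensorAlgebra.ι k (M := M)) ∘ₗ f)) z))
        = (LinearMap.mul' k (Module.End k (MonoidAlgebra H (FreeMonoid ιB))))
            ((TensorProduct.map ((rho P Q B (lam P Q B s)) ∘ₗ actL k x) (lam P Q B s)) z) := by
      intro z
      induction z using TensorProduct.induction_on with
      | zero => simp
      | tmul a a' =>
          simp only [TensorProduct.map_tmul, LinearMap.mul'_apply, LinearMap.comp_apply,
            map_mul, TensorAlgebra.lift_ι_apply]
          rw [rho_f P Q B s f hPf hQf]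
      | add z1 z2 ih1 ih2 => simp only [map_add, LinearMap.add_apply, ih1, ih2]
    exact (key (Coalgebra.comul h)).symm

end Ops

noncomputable def tw (B : Module.Basis ιB k V) : FreeMonoid ιB →* TensorAlgebra k V :=
  FreeMonoid.lift (fun b => TensorAlgebra.ι k (B b))

/-- The inverse comparison map `MonoidAlgebra H (FreeMonoid ιB) → T(V) ⊗ H`. -/
noncomputable def chi' (B : Module.Basis ιB k V) :
    MonoidAlgebra H (FreeMonoid ιB) →ₗ[k] (TensorAlgebra k V) ⊗[k] H :=
  (Finsupp.lsum k fun w => TensorProduct.mk k (TensorAlgebra k V) H (tw B w)) ∘ₗ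
    (MonoidAlgebra.coeffLinearEquiv k).toLinearMap

theorem chi'_single (w : FreeMonoid ιB) (g : H) :
    chi' (H := H) B (MonoidAlgebra.single w g) = (tw B w) ⊗ₜ[k] g := by
  show Finsupp.lsum k (fun w => TensorProduct.mk k (TensorAlgebra k V) H (tw B w))
    (Finsupp.single w g) = _
  rw [Finsupp.lsum_single]
  rfl

theorem chi'_mulLeft (t : TensorAlgebra k V) :
    (chi' (H := H) B) ∘ₗ (LinearMap.mulLeft k ((TensorAlgebra.lift k (emb (H := H) B)) t))
      = (LinearMap.rTensor H (LinearMap.mulLeft k t)) ∘ₗ (chi' (H := H) B) := by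
  induction t using TensorAlgebra.induction with
  | algebraMap r =>
      refine ma_lhom_ext fun w g => ?_
      show chi' (H := H) B ((TensorAlgebra.lift k (emb (H := H) B)) (algebraMap k _ r)
          * MonoidAlgebra.single w g)
        = LinearMap.rTensor H (LinearMap.mulLeft k (algebraMap k _ r))
            (chi' (H := H) B (MonoidAlgebra.single w g))
      rw [AlgHom.commutes, Algebra.algebraMap_eq_smul_one, smul_mul_assoc, one_mul, map_smul,
        chi'_single]
      simp [TensorProduct.smul_tmul', Algebra.algebraMap_eq_smul_one, smul_mul_assoc]
  | ι v =>
      refine ma_lhom_ext fun w g => ?_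
      show chi' (H := H) B ((TensorAlgebra.lift k (emb (H := H) B)) (TensorAlgebra.ι k v)
          * MonoidAlgebra.single w g)
        = LinearMap.rTensor H (LinearMap.mulLeft k (TensorAlgebra.ι k v))
            (chi' (H := H) B (MonoidAlgebra.single w g))
      rw [TensorAlgebra.lift_ι_apply, chi'_single, LinearMap.rTensor_tmul,
        LinearMap.mulLeft_apply]
      set G : V →ₗ[k] (TensorAlgebra k V) ⊗[k] H :=
        ((TensorProduct.mk k (TensorAlgebra k V) H).flip g) ∘ₗ
          (LinearMap.mulRight k (tw B w)) ∘ₗ (TensorAlgebra.ι k) with hG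
      have hGv : ∀ v', G v' = (TensorAlgebra.ι k v' * tw B w) ⊗ₜ[k] g := fun v' => rfl
      rw [← hGv v]
      rw [emb_repr, Finsupp.sum_mul, map_finsuppSum]
      conv_rhs => rw [← B.linearCombination_repr v]
      rw [Finsupp.linearCombination_apply, map_finsuppSum]
      refine Finsupp.sum_congr fun b _ => ?_
      rw [smul_mul_assoc, map_smul, MonoidAlgebra.single_mul_single, one_mul, chi'_single,
        map_smul, hGv]
      have htw : tw B (FreeMonoid.of b * w) = TensorAlgebra.ι k (B b) * tw B w := by
        rw [map_mul]
        congr 1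
      rw [htw]
  | mul t1 t2 ih1 ih2 =>
      refine LinearMap.ext fun e => ?_
      have e1 := LinearMap.congr_fun ih1 (((TensorAlgebra.lift k (emb (H := H) B)) t2) * e)
      have e2 := LinearMap.congr_fun ih2 e
      simp only [LinearMap.comp_apply, LinearMap.mulLeft_apply] at e1 e2 ⊢
      rw [map_mul (TensorAlgebra.lift k (emb (H := H) B)) t1 t2, mul_assoc, e1, e2,
        ← LinearMap.comp_apply, ← LinearMap.rTensor_comp, ← LinearMap.mulLeft_mul]
  | add t1 t2 ih1 ih2 =>
      refine LinearMap.ext fun e => ?_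
      have e1 := LinearMap.congr_fun ih1 e
      have e2 := LinearMap.congr_fun ih2 e
      simp only [LinearMap.comp_apply, LinearMap.mulLeft_apply] at e1 e2 ⊢
      rw [map_add, add_mul, map_add, e1, e2]
      have hml : LinearMap.mulLeft k (t1 + t2)
          = LinearMap.mulLeft k t1 + LinearMap.mulLeft k t2 :=
        LinearMap.ext fun u => add_mul _ _ _
      rw [hml, LinearMap.rTensor_add, LinearMap.add_apply]

end Fulcrum
namespace Fulcrum

open Coalgebra

variable {k H M V : Type*} [Field k] [Ring H] [HopfAlgebra k H]
    [AddCommGroup M] [Module k M] [Module H M] [IsScalarTower k H M]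
    [AddCommGroup V] [Module k V] {ιB : Type*}

theorem chi'_inverts (B : Module.Basis ιB k V) (t : TensorAlgebra k V) (g : H) :
    chi' (H := H) B ((TensorAlgebra.lift k (emb (H := H) B)) t
        * MonoidAlgebra.single (1 : FreeMonoid ιB) g)
      = t ⊗ₜ[k] g := by
  have hc := LinearMap.congr_fun (chi'_mulLeft B t) (MonoidAlgebra.single (1 : FreeMonoid ιB) g)
  simp only [LinearMap.comp_apply, LinearMap.mulLeft_apply] at hc
  rw [hc, chi'_single, map_one, LinearMap.rTensor_tmul, LinearMap.mulLeft_apply, mul_one]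

theorem fulcrum_inj (f : H →ₗ[k] M) (s : V →ₗ[k] M)
    (P : M →ₗ[k] H) (Q : M →ₗ[k] V) (B : Module.Basis ιB k V)
    (hadj : ∀ h a : H, h • f a = f (adjL k a h))
    (hPf : ∀ a, P (f a) = a) (hQf : ∀ a, Q (f a) = 0)
    (hPs : ∀ v, P (s v) = 0) (hQs : ∀ v, Q (s v) = v)
    (hPQ : ∀ x, f (P x) + s (Q x) = x) :
    Function.Injective (LinearMap.mul' k (RingQuot (fulcrumRel k f)) ∘ₗ
      TensorProduct.map
        ((RingQuot.mkAlgHom k (fulcrumRel k f)).toLinearMap ∘ₗ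
          (TensorAlgebra.lift k ((TensorAlgebra.ι k (M := M)) ∘ₗ s)).toLinearMap)
        ((RingQuot.mkAlgHom k (fulcrumRel k f)).toLinearMap ∘ₗ
          (TensorAlgebra.ι k (M := M)) ∘ₗ f)) := by
  set θ0 := TensorAlgebra.lift k (rho P Q B (lam P Q B s)) with hθ0
  set θ := RingQuot.liftAlgHom k (s := fulcrumRel k f)
    ⟨θ0, theta0_rel P Q B s f hadj hPf hQf hPs hQs hPQ⟩ with hθ
  set L : RingQuot (fulcrumRel k f) →ₗ[k] (TensorAlgebra k V) ⊗[k] H :=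
    (chi' (H := H) B) ∘ₗ
      (LinearMap.applyₗ (MonoidAlgebra.single (1 : FreeMonoid ιB) (1 : H))) ∘ₗ
      θ.toLinearMap with hL
  set Φ := (LinearMap.mul' k (RingQuot (fulcrumRel k f)) ∘ₗ
      TensorProduct.map
        ((RingQuot.mkAlgHom k (fulcrumRel k f)).toLinearMap ∘ₗ
          (TensorAlgebra.lift k ((TensorAlgebra.ι k (M := M)) ∘ₗ s)).toLinearMap)
        ((RingQuot.mkAlgHom k (fulcrumRel k f)).toLinearMap ∘ₗ
          (TensorAlgebra.ι k (M := M)) ∘ₗ f)) with hΦ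
  have hTs : (θ0.comp (TensorAlgebra.lift k ((TensorAlgebra.ι k (M := M)) ∘ₗ s)))
      = (Algebra.lmul k (MonoidAlgebra H (FreeMonoid ιB))).comp
        (TensorAlgebra.lift k (emb (H := H) B)) := by
    apply TensorAlgebra.hom_ext
    refine LinearMap.ext fun v => ?_
    simp only [LinearMap.comp_apply, AlgHom.toLinearMap_apply, AlgHom.comp_apply,
      TensorAlgebra.lift_ι_apply, hθ0]
    rw [rho_s P Q B s hPs hQs]
    rfl
  have key : L ∘ₗ Φ = LinearMap.id := by
    apply TensorProduct.ext'
    intro t h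
    have hΦth : Φ (t ⊗ₜ[k] h)
        = (RingQuot.mkAlgHom k (fulcrumRel k f))
            ((TensorAlgebra.lift k ((TensorAlgebra.ι k (M := M)) ∘ₗ s)) t)
          * (RingQuot.mkAlgHom k (fulcrumRel k f)) (TensorAlgebra.ι k (f h)) := by
      simp [hΦ, LinearMap.mul'_apply]
    rw [LinearMap.comp_apply, hΦth, LinearMap.id_apply]
    have hθval : θ ((RingQuot.mkAlgHom k (fulcrumRel k f))
          ((TensorAlgebra.lift k ((TensorAlgebra.ι k (M := M)) ∘ₗ s)) t)
        * (RingQuot.mkAlgHom k (fulcrumRel k f)) (TensorAlgebra.ι k (f h)))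
        = θ0 ((TensorAlgebra.lift k ((TensorAlgebra.ι k (M := M)) ∘ₗ s)) t)
          * θ0 (TensorAlgebra.ι k (f h)) := by
      rw [map_mul, hθ, RingQuot.liftAlgHom_mkAlgHom_apply, RingQuot.liftAlgHom_mkAlgHom_apply]
    show chi' (H := H) B
      ((θ ((RingQuot.mkAlgHom k (fulcrumRel k f))
          ((TensorAlgebra.lift k ((TensorAlgebra.ι k (M := M)) ∘ₗ s)) t)
        * (RingQuot.mkAlgHom k (fulcrumRel k f)) (TensorAlgebra.ι k (f h))))
        (MonoidAlgebra.single (1 : FreeMonoid ιB) (1 : H))) = t ⊗ₜ[k] h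
    rw [hθval, Module.End.mul_apply]
    have h1 : θ0 (TensorAlgebra.ι k (f h))
        (MonoidAlgebra.single (1 : FreeMonoid ιB) (1 : H))
        = MonoidAlgebra.single (1 : FreeMonoid ιB) h := by
      rw [hθ0, TensorAlgebra.lift_ι_apply, rho_f P Q B s f hPf hQf, lam_nil, mul_one]
    rw [h1]
    have h2 := congrArg (fun (φ : TensorAlgebra k V →ₐ[k] Module.End k
        (MonoidAlgebra H (FreeMonoid ιB))) =>
      φ t (MonoidAlgebra.single (1 : FreeMonoid ιB) h)) hTs
    simp only [AlgHom.comp_apply, AlgHom.toLinearMap_apply] at h2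
    rw [h2]
    exact chi'_inverts B t h
  intro z1 z2 hz
  have := congrArg L hz
  rwa [← LinearMap.comp_apply, ← LinearMap.comp_apply, key, LinearMap.id_apply,
    LinearMap.id_apply] at this

end Fulcrum
/-- Under the fulcrum hypotheses, the `k`-linear map
`T(V) ⊗ₖ H → T(V)#_M H`, `a ⊗ h ↦ π(T(s)(a)) · π(ι(f(h)))`, is bijective. -/
theorem fulcrum_tensor_decomposition
    {k H M V : Type*} [Field k] [Ring H] [HopfAlgebra k H]
    [AddCommGroup M] [Module k M] [Module H M] [IsScalarTower k H M]
    [AddCommGroup V] [Module k V]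
    (f : H →ₗ[k] M) (s : V →ₗ[k] M)
    (hf : Function.Injective f) (hs : Function.Injective s)
    (hS : Function.Bijective (HopfAlgebra.antipode (R := k) (A := H)))
    (hadj : ∀ h a : H, h • f a = f (adjL k a h))
    (hcompl : IsCompl (LinearMap.range f) (LinearMap.range s)) :
    Function.Bijective (LinearMap.mul' k (RingQuot (fulcrumRel k f)) ∘ₗ
      TensorProduct.map
        ((RingQuot.mkAlgHom k (fulcrumRel k f)).toLinearMap ∘ₗ
          (TensorAlgebra.lift k ((TensorAlgebra.ι k (M := M)) ∘ₗ s)).toLinearMap)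
        ((RingQuot.mkAlgHom k (fulcrumRel k f)).toLinearMap ∘ₗ
          (TensorAlgebra.ι k (M := M)) ∘ₗ f)) := by
  classical
  set B := Module.Basis.ofVectorSpace k V with hB
  set pf := (LinearMap.range f).projectionOnto (LinearMap.range s) hcompl with hpf
  set ps := (LinearMap.range s).projectionOnto (LinearMap.range f) hcompl.symm with hps
  set P : M →ₗ[k] H := ((LinearEquiv.ofInjective f hf).symm :
      LinearMap.range f →ₗ[k] H) ∘ₗ pf with hP
  set Q : M →ₗ[k] V := ((LinearEquiv.ofInjective s hs).symm :
      LinearMap.range s →ₗ[k] V) ∘ₗ ps with hQ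
  have hfsymm : ∀ u : LinearMap.range f, f ((LinearEquiv.ofInjective f hf).symm u) = u := by
    intro u
    conv_rhs => rw [← (LinearEquiv.ofInjective f hf).apply_symm_apply u]
    rw [LinearEquiv.ofInjective_apply]
  have hssymm : ∀ u : LinearMap.range s, s ((LinearEquiv.ofInjective s hs).symm u) = u := by
    intro u
    conv_rhs => rw [← (LinearEquiv.ofInjective s hs).apply_symm_apply u]
    rw [LinearEquiv.ofInjective_apply]
  have hPval : ∀ x, f (P x) = ↑(pf x) := fun x => hfsymm _
  have hQval : ∀ x, s (Q x) = ↑(ps x) := fun x => hssymm _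
  have hPQ : ∀ x, f (P x) + s (Q x) = x := by
    intro x
    rw [hPval, hQval]
    exact Submodule.projection_add_projection_eq_self hcompl x
  have hPf : ∀ a, P (f a) = a := by
    intro a
    apply hf
    rw [hPval]
    have : pf (f a) = ⟨f a, LinearMap.mem_range_self f a⟩ := by
      rw [hpf]
      exact Submodule.projectionOnto_apply_left hcompl ⟨f a, LinearMap.mem_range_self f a⟩
    rw [this]
  have hQf : ∀ a, Q (f a) = 0 := by
    intro a
    apply hs
    rw [hQval, map_zero]
    have : ps (f a) = 0 := by
      rw [hps]
      exact Submodule.projectionOnto_apply_right hcompl.symm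
        ⟨f a, LinearMap.mem_range_self f a⟩
    rw [this]
    rfl
  have hQs : ∀ v, Q (s v) = v := by
    intro v
    apply hs
    rw [hQval]
    have : ps (s v) = ⟨s v, LinearMap.mem_range_self s v⟩ := by
      rw [hps]
      exact Submodule.projectionOnto_apply_left hcompl.symm
        ⟨s v, LinearMap.mem_range_self s v⟩
    rw [this]
  have hPs : ∀ v, P (s v) = 0 := by
    intro v
    apply hf
    rw [hPval, map_zero]
    have : pf (s v) = 0 := by
      rw [hpf]
      exact Submodule.projectionOnto_apply_right hcompl
        ⟨s v, LinearMap.mem_range_self s v⟩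
    rw [this]
    rfl
  exact ⟨Fulcrum.fulcrum_inj f s P Q B hadj hPf hQf hPs hQs hPQ,
    fulcrum_surj f s P Q hPQ⟩
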